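/- Let p be prime, n ≥ 1, and for N ≥ 0 write R(N) = N mod (p^n − p^{n−1}) and Q(N) = ⌊N/(p^n − p^{n−1})⌋. With c_N^{(i)} the ω_n-division terms as above, for every N ≥ 0: ord_p(c_N^{(i)}) ≥ Q(N) + 2 for 0 ≤ i ≤ R(N) + p^{n−1} − 1; ord_p(c_N^{(R(N)+p^{n−1})}) = Q(N) + 1; and ord_p(c_N^{(i)}) ≥ Q(N) + 1 for R(N) + p^{n−1} + 1 ≤ i ≤ p^n − 1. -/

import Mathlib

/-- Base case of the `ω_n`-division terms: `c_0^{(i)} = -C(p^n, i)` for `1 ≤ i ≤ p^n - 1`,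
and `c_0^{(i)} = 0` for `i ≤ 0` (and for `i > p^n - 1`, which never occurs). -/
def c0 (p n : ℕ) (i : ℤ) : ℤ :=
  if 1 ≤ i ∧ i ≤ (p : ℤ) ^ n - 1 then -((p ^ n).choose i.toNat : ℤ) else 0

/-- The `ω_n`-division terms `c_N^{(i)}`, defined recursively by
`c_N^{(i)} = c_{N-1}^{(i-1)} + c_{N-1}^{(p^n-1)} c_0^{(i)}`. -/
def cdiv (p n : ℕ) : ℕ → ℤ → ℤ
  | 0, i => c0 p n i
  | N + 1, i => cdiv p n N (i - 1) + cdiv p n N ((p : ℤ) ^ n - 1) * c0 p n i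

namespace Stmt8Aux

lemma cdiv_zero' (p n : ℕ) (i : ℤ) : cdiv p n 0 i = c0 p n i := rfl

lemma cdiv_succ (p n N : ℕ) (i : ℤ) :
    cdiv p n (N + 1) i = cdiv p n N (i - 1) + cdiv p n N ((p : ℤ) ^ n - 1) * c0 p n i := rfl

lemma c0_nonpos (p n : ℕ) {i : ℤ} (hi : i ≤ 0) : c0 p n i = 0 := by
  rw [c0, if_neg]; rintro ⟨h1, -⟩; omega

lemma cdiv_nonpos (p n : ℕ) : ∀ (N : ℕ) {i : ℤ}, i ≤ 0 → cdiv p n N i = 0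
  | 0, i, hi => by rw [cdiv_zero', c0_nonpos p n hi]
  | N + 1, i, hi => by
      rw [cdiv_succ, cdiv_nonpos p n N (by omega : i - 1 ≤ 0), c0_nonpos p n hi, mul_zero,
        add_zero]

lemma cast_pow_sub_one {p n : ℕ} (hpn : 1 ≤ p ^ n) :
    ((p ^ n - 1 : ℕ) : ℤ) = (p : ℤ) ^ n - 1 := by
  rw [Nat.cast_sub hpn, Nat.cast_pow, Nat.cast_one]

lemma c0_natCast {p n : ℕ} (hpn : 1 ≤ p ^ n) {i : ℕ} (h1 : 1 ≤ i) (h2 : i ≤ p ^ n - 1) :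
    c0 p n (i : ℤ) = -((p ^ n).choose i : ℤ) := by
  have hc : ((p ^ n : ℕ) : ℤ) = (p : ℤ) ^ n := by push_cast; ring
  have hcond : 1 ≤ (i : ℤ) ∧ (i : ℤ) ≤ (p : ℤ) ^ n - 1 := by
    rw [← hc]; omega
  rw [c0, if_pos hcond, Int.toNat_natCast]

lemma fact_choose {p n i : ℕ} (hp : p.Prime) (h1 : i ≠ 0) (h2 : i ≤ p ^ n) :
    ((p ^ n).choose i).factorization p = n - i.factorization p := by
  have h := hp.emultiplicity_choose_prime_pow h2 h1
  rw [(Nat.finiteMultiplicity_iff.2 ⟨hp.ne_one, Nat.choose_pos h2⟩).emultiplicity_eq_multiplicity,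
    Nat.cast_inj] at h
  rw [Nat.multiplicity_eq_factorization hp (Nat.choose_pos h2).ne',
    Nat.multiplicity_eq_factorization hp h1] at h
  exact h

lemma c0_dvd {p n : ℕ} (hp : p.Prime) {i t : ℕ} (h1 : 1 ≤ i) (h2 : i ≤ p ^ n - 1)
    (ht : t + i.factorization p ≤ n) : (p : ℤ) ^ t ∣ c0 p n (i : ℤ) := by
  have hpn : 1 ≤ p ^ n := Nat.one_le_pow _ _ hp.pos
  rw [c0_natCast hpn h1 h2, dvd_neg, show ((p : ℤ)) ^ t = ((p ^ t : ℕ) : ℤ) by push_cast; ring,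
    Int.natCast_dvd_natCast]
  have hC : (p ^ n).choose i ≠ 0 := (Nat.choose_pos (by omega)).ne'
  rw [hp.pow_dvd_iff_le_factorization hC, fact_choose hp (by omega) (by omega)]
  omega

lemma c0_exact {p n : ℕ} (hp : p.Prime) (hn : 1 ≤ n) :
    ∃ u : ℤ, c0 p n ((p ^ (n - 1) : ℕ) : ℤ) = (p : ℤ) * u ∧ ¬(p : ℤ) ∣ u := by
  have hp2 := hp.two_le
  have hlt : p ^ (n - 1) < p ^ n := Nat.pow_lt_pow_right (by omega) (by omega)
  have h1 : 1 ≤ p ^ (n - 1) := Nat.one_le_pow _ _ hp.pos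
  set C := (p ^ n).choose (p ^ (n - 1)) with hC
  have hC0 : C ≠ 0 := (Nat.choose_pos (by omega)).ne'
  have hfact : C.factorization p = 1 := by
    rw [hC, fact_choose hp (by omega) (by omega), Nat.Prime.factorization_pow hp,
      Finsupp.single_eq_same]
    omega
  have hmul : p ^ C.factorization p * (C / p ^ C.factorization p) = C :=
    Nat.ordProj_mul_ordCompl_eq_self C p
  have hnd : ¬ p ∣ C / p ^ C.factorization p := Nat.not_dvd_ordCompl hp hC0
  rw [hfact, pow_one] at hmul hnd
  obtain ⟨D, hD, hDnd⟩ : ∃ D : ℕ, p * D = C ∧ ¬ p ∣ D := ⟨C / p, hmul, hnd⟩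
  refine ⟨-(D : ℤ), ?_, ?_⟩
  · rw [c0_natCast (by omega) h1 (by omega), ← hC, ← hD]
    push_cast
    ring
  · rw [dvd_neg, Int.natCast_dvd_natCast]
    exact hDnd

lemma m_facts {p n : ℕ} (hp2 : 2 ≤ p) (hn : 1 ≤ n) :
    1 ≤ p ^ (n - 1) ∧ (p ^ n - p ^ (n - 1)) + p ^ (n - 1) = p ^ n ∧
      p ^ (n - 1) ≤ p ^ n - p ^ (n - 1) := by
  have h1 : 1 ≤ p ^ (n - 1) := Nat.one_le_pow _ _ (by omega)
  have h2 : p ^ (n - 1) * p = p ^ n := by rw [← pow_succ]; congr 1; omega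
  have h3 : p ^ (n - 1) * 2 ≤ p ^ (n - 1) * p := Nat.mul_le_mul_left _ hp2
  omega

lemma v_dichotomy {p n : ℕ} (hp : p.Prime) (hn : 1 ≤ n) {j : ℕ} (h1 : 1 ≤ j)
    (h2 : j < p ^ n) :
    (p ^ (n - 1) ∣ j → p ^ (n - 1) ≤ j ∧ j.factorization p + 1 ≤ n) ∧
    (¬ p ^ (n - 1) ∣ j → j.factorization p + 2 ≤ n) := by
  have hj : j ≠ 0 := by omega
  have hv : j.factorization p + 1 ≤ n := by
    by_contra h
    push_neg at h
    have hd : p ^ n ∣ j := (hp.pow_dvd_iff_le_factorization hj).2 (by omega)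
    have := Nat.le_of_dvd (by omega) hd
    omega
  refine ⟨fun hd => ⟨Nat.le_of_dvd (by omega) hd, hv⟩, fun hd => ?_⟩
  have : ¬ (n - 1 ≤ j.factorization p) := fun h =>
    hd ((hp.pow_dvd_iff_le_factorization hj).2 h)
  omega

lemma v_le {p n : ℕ} (hp : p.Prime) (hn : 1 ≤ n) {j : ℕ} (h1 : 1 ≤ j) (h2 : j < p ^ n) :
    j.factorization p + 1 ≤ n := by
  by_cases hd : p ^ (n - 1) ∣ j
  · exact ((v_dichotomy hp hn h1 h2).1 hd).2
  · have := (v_dichotomy hp hn h1 h2).2 hd; omega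

lemma le_div_of_mul_le {m x q : ℕ} (hm0 : 0 < m) (h : m * q ≤ x) : q ≤ x / m := by
  rw [Nat.le_div_iff_mul_le hm0, Nat.mul_comm]
  exact h

section Arith

variable {p n m : ℕ}

/-- Arithmetic fact for the generic tail bound. -/
lemma F3 (hp : p.Prime) (hn : 1 ≤ n) (hmadd : m + p ^ (n - 1) = p ^ n)
    (hmp : p ^ (n - 1) ≤ m) {N i k : ℕ} (h1 : 1 ≤ i)
    (h2 : i ≤ p ^ n - 1) (hk : k + 1 ≤ i) (hkN : k ≤ N) :
    N / m + 1 ≤ (N - k + m - 1) / m + (n - (i - k).factorization p) := by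
  have hm1 : 1 ≤ p ^ (n - 1) := Nat.one_le_pow _ _ hp.pos
  have hm0 : 0 < m := by omega
  have hj1 : 1 ≤ i - k := by omega
  have hjn : i - k < p ^ n := by omega
  have hV := v_dichotomy hp hn hj1 hjn
  have hNm := Nat.div_add_mod N m
  have hrm : N % m < m := Nat.mod_lt _ hm0
  generalize hr : N % m = r at hNm hrm
  by_cases hd : p ^ (n - 1) ∣ (i - k)
  · obtain ⟨hjge, hv⟩ := hV.1 hd
    have hD : N / m ≤ (N - k + m - 1) / m := Nat.div_le_div_right (by omega)
    have h5 : 1 ≤ n - (i - k).factorization p := by omega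
    generalize (N - k + m - 1) / m = D at hD ⊢
    generalize N / m = q at hD ⊢
    omega
  · have hv := hV.2 hd
    have hD : N / m ≤ (N - k + m - 1) / m + 1 := by
      rcases Nat.eq_zero_or_pos (N / m) with h0 | h0
      · rw [h0]; exact Nat.zero_le _
      · obtain ⟨q', hq'⟩ : ∃ q', N / m = q' + 1 := ⟨N / m - 1, (Nat.succ_pred_eq_of_pos h0).symm⟩
        rw [hq']
        apply Nat.succ_le_succ
        apply le_div_of_mul_le hm0
        rw [hq', Nat.mul_add, Nat.mul_one] at hNm
        generalize m * q' = Mq at hNm ⊢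
        omega
    have h5 : 2 ≤ n - (i - k).factorization p := by omega
    generalize (N - k + m - 1) / m = D at hD ⊢
    generalize N / m = q at hD ⊢
    omega

/-- Arithmetic fact for the low range (strict bound `Q+2`). -/
lemma F2 (hp : p.Prime) (hn : 1 ≤ n) (hmadd : m + p ^ (n - 1) = p ^ n)
    (hmp : p ^ (n - 1) ≤ m) {N i k : ℕ}
    (hi : i + 1 ≤ N % m + p ^ (n - 1)) (hk : k + 1 ≤ i) (hkN : k ≤ N) :
    N / m + 2 ≤ (N - k + m - 1) / m + (n - (i - k).factorization p) := by
  have hm1 : 1 ≤ p ^ (n - 1) := Nat.one_le_pow _ _ hp.pos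
  have hm0 : 0 < m := by omega
  have hNm := Nat.div_add_mod N m
  have hrm : N % m < m := Nat.mod_lt _ hm0
  generalize hr : N % m = r at hNm hrm hi
  have hj1 : 1 ≤ i - k := by omega
  have hjn : i - k < p ^ n := by omega
  have hV := v_dichotomy hp hn hj1 hjn
  by_cases hd : p ^ (n - 1) ∣ (i - k)
  · obtain ⟨hjge, hv⟩ := hV.1 hd
    have hD : N / m + 1 ≤ (N - k + m - 1) / m := by
      apply le_div_of_mul_le hm0
      rw [Nat.mul_add, Nat.mul_one]
      generalize m * (N / m) = Mq at hNm ⊢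
      omega
    have h5 : 1 ≤ n - (i - k).factorization p := by omega
    generalize (N - k + m - 1) / m = D at hD ⊢
    generalize N / m = q at hD ⊢
    omega
  · have hv := hV.2 hd
    have hD : N / m ≤ (N - k + m - 1) / m := by
      apply le_div_of_mul_le hm0
      generalize m * (N / m) = Mq at hNm ⊢
      omega
    have h5 : 2 ≤ n - (i - k).factorization p := by omega
    generalize (N - k + m - 1) / m = D at hD ⊢
    generalize N / m = q at hD ⊢
    omega

/-- Arithmetic fact for the wrap-around case in the exactness proof. -/
lemma F4 (hp : p.Prime) (hn : 1 ≤ n) (hmadd : m + p ^ (n - 1) = p ^ n)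
    (hmp : p ^ (n - 1) ≤ m) {N k : ℕ}
    (hR : N % m + 1 = m) (hk : k + 1 ≤ p ^ (n - 1) - 1) (hkN : k ≤ N) :
    N / m + 3 ≤ (N - k + m - 1) / m + (n - (p ^ (n - 1) - 1 - k).factorization p) := by
  have hm1 : 1 ≤ p ^ (n - 1) := Nat.one_le_pow _ _ hp.pos
  have hm0 : 0 < m := by omega
  have hNm := Nat.div_add_mod N m
  have hrm : N % m < m := Nat.mod_lt _ hm0
  generalize hr : N % m = r at hNm hrm hR
  have hj1 : 1 ≤ p ^ (n - 1) - 1 - k := by omega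
  have hjn : p ^ (n - 1) - 1 - k < p ^ n := by omega
  have hV := v_dichotomy hp hn hj1 hjn
  have hd : ¬ p ^ (n - 1) ∣ (p ^ (n - 1) - 1 - k) := by
    intro hdvd
    have := Nat.le_of_dvd (by omega) hdvd
    omega
  have hv := hV.2 hd
  have hD : N / m + 1 ≤ (N - k + m - 1) / m := by
    apply le_div_of_mul_le hm0
    rw [Nat.mul_add, Nat.mul_one]
    generalize m * (N / m) = Mq at hNm ⊢
    omega
  have h5 : 2 ≤ n - (p ^ (n - 1) - 1 - k).factorization p := by omega
  generalize (N - k + m - 1) / m = D at hD ⊢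
  generalize N / m = q at hD ⊢
  omega

/-- The main divisibility lemma, by induction on `N`, with per-term lower bounds. -/
lemma cdiv_dvd (hp : p.Prime) (hn : 1 ≤ n) (hmadd : m + p ^ (n - 1) = p ^ n)
    (hmp : p ^ (n - 1) ≤ m) :
    ∀ N : ℕ, ∀ i t : ℕ, 1 ≤ i → i ≤ p ^ n - 1 →
      (∀ k : ℕ, k ≤ N → k + 1 ≤ i →
        t ≤ (N - k + m - 1) / m + (n - (i - k).factorization p)) →
      (p : ℤ) ^ t ∣ cdiv p n N (i : ℤ) := by
  have hm1 : 1 ≤ p ^ (n - 1) := Nat.one_le_pow _ _ hp.pos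
  have hm0 : 0 < m := by omega
  have hpn : 1 ≤ p ^ n := by omega
  intro N
  induction N with
  | zero =>
    intro i t h1 h2 ht
    have h0 := ht 0 le_rfl h1
    rw [Nat.div_eq_of_lt (by omega : 0 - 0 + m - 1 < m)] at h0
    simp only [Nat.sub_zero] at h0
    have hv2 : i.factorization p + 1 ≤ n := v_le hp hn h1 (by omega)
    rw [cdiv_zero']
    exact c0_dvd hp h1 h2 (by omega)
  | succ N IH =>
    intro i t h1 h2 ht
    have hb : (p : ℤ) ^ (N / m + 1) ∣ cdiv p n N ((p : ℤ) ^ n - 1) := by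
      rw [← cast_pow_sub_one hpn]
      exact IH (p ^ n - 1) (N / m + 1) (by omega) le_rfl
        (fun k hk hki => F3 hp hn hmadd hmp (by omega) le_rfl hki hk)
    have hv2 : i.factorization p + 1 ≤ n := v_le hp hn h1 (by omega)
    have hc0 : (p : ℤ) ^ (n - i.factorization p) ∣ c0 p n (i : ℤ) :=
      c0_dvd hp h1 h2 (by omega)
    have ht0 := ht 0 (by omega) h1
    simp only [Nat.sub_zero] at ht0
    have hdiv : (N + 1 + m - 1) / m = N / m + 1 := by
      rw [show N + 1 + m - 1 = N + m by omega, Nat.add_div_right _ hm0]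
    rw [hdiv] at ht0
    rw [cdiv_succ]
    apply dvd_add
    · rcases eq_or_lt_of_le h1 with h1' | h1'
      · rw [show (i : ℤ) - 1 = 0 by omega, cdiv_nonpos p n N le_rfl]
        exact dvd_zero _
      · rw [show (i : ℤ) - 1 = ((i - 1 : ℕ) : ℤ) by omega]
        apply IH (i - 1) t (by omega) (by omega)
        intro k hk hki
        have h := ht (k + 1) (by omega) (by omega)
        rw [show N + 1 - (k + 1) = N - k by omega, show i - (k + 1) = i - 1 - k by omega] at h
        exact h
    · calc (p : ℤ) ^ t ∣ (p : ℤ) ^ (N / m + 1 + (n - i.factorization p)) :=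
            pow_dvd_pow _ ht0
        _ = (p : ℤ) ^ (N / m + 1) * (p : ℤ) ^ (n - i.factorization p) := pow_add _ _ _
        _ ∣ cdiv p n N ((p : ℤ) ^ n - 1) * c0 p n (i : ℤ) := mul_dvd_mul hb hc0

/-- Exactness at the special position, by induction on `N`. -/
lemma cdiv_exact (hp : p.Prime) (hn : 1 ≤ n) (hmadd : m + p ^ (n - 1) = p ^ n)
    (hmp : p ^ (n - 1) ≤ m) (N : ℕ) :
    ∃ z : ℤ, cdiv p n N ((N % m + p ^ (n - 1) : ℕ) : ℤ) =
      (p : ℤ) ^ (N / m + 1) * z ∧ ¬(p : ℤ) ∣ z := by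
  have hm1 : 1 ≤ p ^ (n - 1) := Nat.one_le_pow _ _ hp.pos
  have hm0 : 0 < m := by omega
  have hpn : 1 ≤ p ^ n := by omega
  have hprime : Prime (p : ℤ) := Nat.prime_iff_prime_int.1 hp
  induction N with
  | zero =>
    obtain ⟨u, hu, hu'⟩ := c0_exact hp hn
    refine ⟨u, ?_, hu'⟩
    rw [Nat.zero_mod, Nat.zero_div, Nat.zero_add, zero_add, pow_one, cdiv_zero']
    exact hu
  | succ N IH =>
    obtain ⟨z, hz, hz'⟩ := IH
    have hNm := Nat.div_add_mod N m
    have hrm : N % m < m := Nat.mod_lt _ hm0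
    generalize hr : N % m = r at hNm hrm hz
    by_cases hcase : r + 1 = m
    · -- wrap-around
      have e : N + 1 = m * (N / m + 1) := by
        rw [Nat.mul_add, Nat.mul_one]
        generalize m * (N / m) = Mq at hNm ⊢
        omega
      have hmod : (N + 1) % m = 0 := by rw [e]; exact Nat.mul_mod_right _ _
      have hdivq : (N + 1) / m = N / m + 1 := by
        rw [e]; exact Nat.mul_div_cancel_left _ hm0
      have hpos : r + p ^ (n - 1) = p ^ n - 1 := by omega
      rw [hpos, cast_pow_sub_one hpn] at hz
      obtain ⟨u, hu, hu'⟩ := c0_exact hp hn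
      have hfirst : ∃ w : ℤ, cdiv p n N (((p ^ (n - 1) : ℕ) : ℤ) - 1) =
          (p : ℤ) ^ (N / m + 3) * w := by
        by_cases hone : p ^ (n - 1) = 1
        · refine ⟨0, ?_⟩
          rw [cdiv_nonpos p n N (by rw [hone]; simp), mul_zero]
        · have hdvd : (p : ℤ) ^ (N / m + 3) ∣ cdiv p n N ((p ^ (n - 1) - 1 : ℕ) : ℤ) :=
            cdiv_dvd hp hn hmadd hmp N (p ^ (n - 1) - 1) (N / m + 3) (by omega) (by omega)
              (fun k hk hki => F4 hp hn hmadd hmp (by rw [hr]; exact hcase) hki hk)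
          obtain ⟨w, hw⟩ := hdvd
          refine ⟨w, ?_⟩
          rw [show ((p ^ (n - 1) : ℕ) : ℤ) - 1 = ((p ^ (n - 1) - 1 : ℕ) : ℤ) by omega]
          exact hw
      obtain ⟨w, hw⟩ := hfirst
      refine ⟨z * u + p * w, ?_, ?_⟩
      · rw [hmod, hdivq, Nat.zero_add, cdiv_succ, hw, hz, hu]
        ring
      · intro hdvd
        have h' : (p : ℤ) ∣ p * w := Dvd.intro _ rfl
        have hzu : (p : ℤ) ∣ z * u := by
          have := dvd_sub hdvd h'
          simpa using this
        rcases hprime.dvd_mul.1 hzu with h | h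
        · exact hz' h
        · exact hu' h
    · -- no wrap
      have e : N + 1 = m * (N / m) + (r + 1) := by
        generalize m * (N / m) = Mq at hNm ⊢
        omega
      have hmod : (N + 1) % m = r + 1 := by
        rw [e, Nat.mul_add_mod]
        exact Nat.mod_eq_of_lt (by omega)
      have hdivq : (N + 1) / m = N / m := by
        rw [e, Nat.mul_add_div hm0]
        have h0 : (r + 1) / m = 0 := Nat.div_eq_of_lt (by omega)
        rw [h0, Nat.add_zero]
      rw [hmod, hdivq]
      have hile : r + 1 + p ^ (n - 1) ≤ p ^ n - 1 := by omega
      have hb : (p : ℤ) ^ (N / m + 1) ∣ cdiv p n N ((p : ℤ) ^ n - 1) := by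
        rw [← cast_pow_sub_one hpn]
        exact cdiv_dvd hp hn hmadd hmp N (p ^ n - 1) (N / m + 1) (by omega) le_rfl
          (fun k hk hki => F3 hp hn hmadd hmp (by omega) le_rfl hki hk)
      obtain ⟨w, hw⟩ := hb
      have hc0 : (p : ℤ) ∣ c0 p n ((r + 1 + p ^ (n - 1) : ℕ) : ℤ) := by
        have hv := v_le hp hn (j := r + 1 + p ^ (n - 1)) (by omega) (by omega)
        have h := c0_dvd (n := n) hp (i := r + 1 + p ^ (n - 1)) (t := 1) (by omega) hile
          (by omega)
        rw [pow_one] at h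
        exact h
      obtain ⟨u, hu⟩ := hc0
      refine ⟨z + p * (w * u), ?_, ?_⟩
      · rw [cdiv_succ, hw, hu,
          show ((r + 1 + p ^ (n - 1) : ℕ) : ℤ) - 1 = ((r + p ^ (n - 1) : ℕ) : ℤ) by omega,
          hz]
        ring
      · intro hdvd
        have h' : (p : ℤ) ∣ p * (w * u) := Dvd.intro _ rfl
        have hdz : (p : ℤ) ∣ z := by
          have := dvd_sub hdvd h'
          simpa using this
        exact hz' hdz

end Arith

end Stmt8Aux

open Stmt8Aux in
/-- Valuation bounds for the `ω_n`-division terms, with `R(N)`, `Q(N)` the remainder and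
quotient of `N` on division by `p^n - p^{n-1}`. -/
theorem stmt_8 (p n : ℕ) (hp : p.Prime) (hn : 1 ≤ n) (N : ℕ) :
    (∀ i : ℕ, i ≤ N % (p ^ n - p ^ (n - 1)) + p ^ (n - 1) - 1 →
      (p : ℤ) ^ (N / (p ^ n - p ^ (n - 1)) + 2) ∣ cdiv p n N (i : ℤ)) ∧
    (cdiv p n N ((N % (p ^ n - p ^ (n - 1)) + p ^ (n - 1) : ℕ) : ℤ) ≠ 0 ∧
      padicValInt p (cdiv p n N ((N % (p ^ n - p ^ (n - 1)) + p ^ (n - 1) : ℕ) : ℤ)) =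
        N / (p ^ n - p ^ (n - 1)) + 1) ∧
    (∀ i : ℕ, N % (p ^ n - p ^ (n - 1)) + p ^ (n - 1) + 1 ≤ i → i ≤ p ^ n - 1 →
      (p : ℤ) ^ (N / (p ^ n - p ^ (n - 1)) + 1) ∣ cdiv p n N (i : ℤ)) := by
  obtain ⟨hm1, hmadd, hmp⟩ := m_facts hp.two_le hn
  have hm0 : 0 < p ^ n - p ^ (n - 1) := by omega
  have hrm : N % (p ^ n - p ^ (n - 1)) < p ^ n - p ^ (n - 1) := Nat.mod_lt _ hm0
  haveI := Fact.mk hp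
  refine ⟨?_, ?_, ?_⟩
  · intro i hi
    rcases Nat.eq_zero_or_pos i with h0 | h0
    · subst h0
      rw [Nat.cast_zero, cdiv_nonpos p n N le_rfl]
      exact dvd_zero _
    · refine cdiv_dvd hp hn hmadd hmp N i _ h0 ?_
        (fun k hk hki => F2 hp hn hmadd hmp (by omega) hki hk)
      generalize N % (p ^ n - p ^ (n - 1)) = r at hi hrm
      omega
  · obtain ⟨z, hz, hz'⟩ := cdiv_exact hp hn hmadd hmp N
    have hz0 : z ≠ 0 := fun h => hz' (h ▸ dvd_zero _)
    have hp0 : ((p : ℤ)) ^ (N / (p ^ n - p ^ (n - 1)) + 1) ≠ 0 :=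
      pow_ne_zero _ (by exact_mod_cast hp.pos.ne')
    constructor
    · rw [hz]
      exact mul_ne_zero hp0 hz0
    · rw [hz, padicValInt.mul hp0 hz0, padicValInt.eq_zero_of_not_dvd hz', add_zero]
      unfold padicValInt
      rw [Int.natAbs_pow, Int.natAbs_natCast, padicValNat.prime_pow]
  · intro i hi1 hi2
    exact cdiv_dvd hp hn hmadd hmp N i (N / (p ^ n - p ^ (n - 1)) + 1) (by omega) hi2
      (fun k hk hki => F3 hp hn hmadd hmp (by omega) hi2 hki hk)
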